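/- For α > 1, c₀ > 0, L > 0, the function m(t,ρ) = min{(c₀^{-α} + αt)^{-1/α} ρ, c₀ L} is a viscosity solution of m_t + (m_ρ)₊^α m = 0 on (0,∞)×(0,∞): at every point where the minimum is not attained by both branches simultaneously m is a classical solution, and at points (t₀,ρ₀) with (c₀^{-α}+αt₀)^{-1/α} ρ₀ = c₀L, the subdifferential D⁻m(t₀,ρ₀) is empty and every (p₁,p₂) ∈ D⁺m(t₀,ρ₀) satisfies p₁ + (p₂)₊^α m(t₀,ρ₀) ≤ 0. -/

import Mathlib

open Real Set Filter

/-- Fréchet superdifferential of a function of two real variables. -/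
def superdiff (f : ℝ × ℝ → ℝ) (x : ℝ × ℝ) : Set (ℝ × ℝ) :=
  {p | ∀ ε > (0:ℝ), ∀ᶠ y in nhds x,
    f y - f x - (p.1 * (y.1 - x.1) + p.2 * (y.2 - x.2)) ≤ ε * ‖y - x‖}

/-- Fréchet subdifferential of a function of two real variables. -/
def subdiff (f : ℝ × ℝ → ℝ) (x : ℝ × ℝ) : Set (ℝ × ℝ) :=
  {p | ∀ ε > (0:ℝ), ∀ᶠ y in nhds x,
    f y - f x - (p.1 * (y.1 - x.1) + p.2 * (y.2 - x.2)) ≥ -ε * ‖y - x‖}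


private lemma exists_pos_path (x v : ℝ × ℝ) {P : ℝ × ℝ → Prop}
    (h : ∀ᶠ y in nhds x, P y) : ∃ s : ℝ, 0 < s ∧ P (x + s • v) := by
  have hc : Continuous (fun s : ℝ => x + s • v) :=
    continuous_const.add (continuous_id.smul continuous_const)
  have ht : Tendsto (fun s : ℝ => x + s • v) (nhdsWithin 0 (Ioi 0)) (nhds x) := by
    have h0 := hc.tendsto 0
    simp only [zero_smul, add_zero] at h0
    exact h0.mono_left nhdsWithin_le_nhds
  rcases ((ht.eventually h).and self_mem_nhdsWithin).exists with ⟨s, h1, h2⟩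
  exact ⟨s, h2, h1⟩

private lemma key_zero (x q : ℝ × ℝ)
    (h : ∀ ε > (0:ℝ), ∀ᶠ y in nhds x,
      q.1 * (y.1 - x.1) + q.2 * (y.2 - x.2) ≤ ε * ‖y - x‖) : q = 0 := by
  by_contra hq
  have hq' : 0 < ‖q‖ := norm_pos_iff.mpr hq
  obtain ⟨s, hs, hP⟩ := exists_pos_path x q (h (‖q‖ / 2) (by positivity))
  have hy1 : (x + s • q).1 - x.1 = s * q.1 := by simp
  have hy2 : (x + s • q).2 - x.2 = s * q.2 := by simp
  have hyn : ‖x + s • q - x‖ = s * ‖q‖ := by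
    rw [add_sub_cancel_left, norm_smul, Real.norm_eq_abs, abs_of_pos hs]
  rw [hy1, hy2, hyn] at hP
  have hsum : q.1 ^ 2 + q.2 ^ 2 ≤ ‖q‖ ^ 2 / 2 := by
    have h2 : s * (q.1 ^ 2 + q.2 ^ 2) ≤ s * (‖q‖ ^ 2 / 2) := by nlinarith
    exact le_of_mul_le_mul_left h2 hs
  have hmax : ‖q‖ ^ 2 ≤ q.1 ^ 2 + q.2 ^ 2 := by
    rw [Prod.norm_def, Real.norm_eq_abs, Real.norm_eq_abs]
    rcases le_total |q.1| |q.2| with hc | hc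
    · rw [max_eq_right hc]; nlinarith [sq_abs q.2, sq_nonneg q.1]
    · rw [max_eq_left hc]; nlinarith [sq_abs q.1, sq_nonneg q.2]
  nlinarith

private lemma hasDerivAt_g (α c₀ t₀ : ℝ) (hα : α ≠ 0)
    (hu : 0 < c₀ ^ (-α) + α * t₀) :
    HasDerivAt (fun t : ℝ => (c₀ ^ (-α) + α * t) ^ (-1 / α))
      (-((c₀ ^ (-α) + α * t₀) ^ (-1 / α) * (c₀ ^ (-α) + α * t₀)⁻¹)) t₀ := by
  have hinner : HasDerivAt (fun t : ℝ => c₀ ^ (-α) + α * t) α t₀ := by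
    simpa using ((hasDerivAt_id t₀).const_mul α).const_add (c₀ ^ (-α))
  have houter : HasDerivAt (fun x : ℝ => x ^ (-1 / α))
      ((-1 / α) * (c₀ ^ (-α) + α * t₀) ^ (-1 / α - 1)) (c₀ ^ (-α) + α * t₀) :=
    Real.hasDerivAt_rpow_const (Or.inl hu.ne')
  have hcomp := houter.comp t₀ hinner
  refine hcomp.congr_deriv ?_
  have hsplit : (c₀ ^ (-α) + α * t₀) ^ (-1 / α - 1)
      = (c₀ ^ (-α) + α * t₀) ^ (-1 / α) * (c₀ ^ (-α) + α * t₀)⁻¹ := by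
    rw [show (-1 / α - 1 : ℝ) = -1 / α + (-1) by ring, Real.rpow_add hu,
      Real.rpow_neg_one]
  rw [hsplit]
  field_simp

set_option maxHeartbeats 1000000 in
theorem vortex_mass_is_viscosity_solution (α c₀ L : ℝ) (hα : 1 < α)
    (hc₀ : 0 < c₀) (hL : 0 < L) (m : ℝ × ℝ → ℝ)
    (hm : ∀ p : ℝ × ℝ, m p = min ((c₀ ^ (-α) + α * p.1) ^ (-1 / α) * p.2) (c₀ * L)) :
    (∀ t₀ ρ₀ : ℝ, 0 < t₀ → 0 < ρ₀ →
      (c₀ ^ (-α) + α * t₀) ^ (-1 / α) * ρ₀ ≠ c₀ * L →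
      ∃ mt mρ : ℝ,
        HasDerivAt (fun t => m (t, ρ₀)) mt t₀ ∧
        HasDerivAt (fun ρ => m (t₀, ρ)) mρ ρ₀ ∧
        mt + max mρ 0 ^ α * m (t₀, ρ₀) = 0) ∧
    (∀ t₀ ρ₀ : ℝ, 0 < t₀ → 0 < ρ₀ →
      (c₀ ^ (-α) + α * t₀) ^ (-1 / α) * ρ₀ = c₀ * L →
      subdiff m (t₀, ρ₀) = ∅ ∧
      ∀ p : ℝ × ℝ, p ∈ superdiff m (t₀, ρ₀) →
        p.1 + max p.2 0 ^ α * m (t₀, ρ₀) ≤ 0) := by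
  constructor
  · intro t₀ ρ₀ ht₀ hρ₀ hne
    have hαpos : (0:ℝ) < α := lt_trans zero_lt_one hα
    have hu₀ : 0 < c₀ ^ (-α) + α * t₀ := by
      have h1 : 0 < c₀ ^ (-α) := Real.rpow_pos_of_pos hc₀ _
      nlinarith
    set u₀ : ℝ := c₀ ^ (-α) + α * t₀ with hu₀def
    set B : ℝ := u₀ ^ (-1 / α) with hBdef
    have hB : 0 < B := Real.rpow_pos_of_pos hu₀ _
    have hBα : B ^ α = u₀⁻¹ := by
      rw [hBdef, ← Real.rpow_mul hu₀.le,
        show (-1 / α * α : ℝ) = -1 by field_simp, Real.rpow_neg_one]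
    have hgd : HasDerivAt (fun t : ℝ => (c₀ ^ (-α) + α * t) ^ (-1 / α))
        (-(B * u₀⁻¹)) t₀ := hasDerivAt_g α c₀ t₀ hαpos.ne' hu₀
    have hφ : HasDerivAt (fun t : ℝ => (c₀ ^ (-α) + α * t) ^ (-1 / α) * ρ₀)
        (-(B * u₀⁻¹) * ρ₀) t₀ := hgd.mul_const ρ₀
    rcases lt_or_gt_of_ne hne with hlt | hgt
    · refine ⟨-(B * u₀⁻¹) * ρ₀, B, ?_, ?_, ?_⟩
      · apply hφ.congr_of_eventuallyEq
        have hev : ∀ᶠ t in nhds t₀, (c₀ ^ (-α) + α * t) ^ (-1 / α) * ρ₀ < c₀ * L :=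
          hφ.continuousAt.eventually (eventually_lt_nhds hlt)
        exact hev.mono fun t ht => by simp only [hm (t, ρ₀)]; exact min_eq_left ht.le
      · have hψ : HasDerivAt (fun ρ : ℝ => B * ρ) B ρ₀ := by
          simpa using (hasDerivAt_id ρ₀).const_mul B
        apply HasDerivAt.congr_of_eventuallyEq (f := fun ρ => B * ρ) ?_ ?_
        · exact hψ
        · have hev : ∀ᶠ ρ in nhds ρ₀, B * ρ < c₀ * L :=
            hψ.continuousAt.eventually (eventually_lt_nhds hlt)
          exact hev.mono fun ρ hρ => by simp only [hm (t₀, ρ)]; exact min_eq_left hρ.le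
      · have hmv : m (t₀, ρ₀) = B * ρ₀ := by
          rw [hm (t₀, ρ₀)]; exact min_eq_left hlt.le
        rw [hmv, max_eq_left hB.le, hBα]
        field_simp
        ring
    · refine ⟨0, 0, ?_, ?_, ?_⟩
      · apply HasDerivAt.congr_of_eventuallyEq (hasDerivAt_const t₀ (c₀ * L))
        have hev : ∀ᶠ t in nhds t₀, c₀ * L < (c₀ ^ (-α) + α * t) ^ (-1 / α) * ρ₀ :=
          hφ.continuousAt.eventually (eventually_gt_nhds hgt)
        exact hev.mono fun t ht => by simp only [hm (t, ρ₀)]; exact min_eq_right ht.le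
      · have hψ : HasDerivAt (fun ρ : ℝ => B * ρ) B ρ₀ := by
          simpa using (hasDerivAt_id ρ₀).const_mul B
        apply HasDerivAt.congr_of_eventuallyEq (hasDerivAt_const ρ₀ (c₀ * L))
        have hev : ∀ᶠ ρ in nhds ρ₀, c₀ * L < B * ρ :=
          hψ.continuousAt.eventually (eventually_gt_nhds hgt)
        exact hev.mono fun ρ hρ => by simp only [hm (t₀, ρ)]; exact min_eq_right hρ.le
      · simp [Real.zero_rpow hαpos.ne']
  · intro t₀ ρ₀ ht₀ hρ₀ heq
    set x : ℝ × ℝ := (t₀, ρ₀) with hxdef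
    have hαpos : (0:ℝ) < α := lt_trans zero_lt_one hα
    have hu₀ : 0 < c₀ ^ (-α) + α * t₀ := by
      have h1 : 0 < c₀ ^ (-α) := Real.rpow_pos_of_pos hc₀ _
      nlinarith
    set u₀ : ℝ := c₀ ^ (-α) + α * t₀ with hu₀def
    set B : ℝ := u₀ ^ (-1 / α) with hBdef
    have hB : 0 < B := Real.rpow_pos_of_pos hu₀ _
    have hBα : B ^ α = u₀⁻¹ := by
      rw [hBdef, ← Real.rpow_mul hu₀.le,
        show (-1 / α * α : ℝ) = -1 by field_simp, Real.rpow_neg_one]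
    set A : ℝ := -(B * u₀⁻¹) * ρ₀ with hAdef
    -- the smooth branch and its derivative
    have hgd : HasDerivAt (fun t : ℝ => (c₀ ^ (-α) + α * t) ^ (-1 / α))
        (-(B * u₀⁻¹)) t₀ := hasDerivAt_g α c₀ t₀ hαpos.ne' hu₀
    have h1 : HasFDerivAt (fun y : ℝ × ℝ => (c₀ ^ (-α) + α * y.1) ^ (-1 / α))
        ((-(B * u₀⁻¹)) • ContinuousLinearMap.fst ℝ ℝ ℝ) x :=
      hgd.comp_hasFDerivAt (f := Prod.fst) x hasFDerivAt_fst
    have hF : HasFDerivAt (fun y : ℝ × ℝ => (c₀ ^ (-α) + α * y.1) ^ (-1 / α) * y.2)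
        (((c₀ ^ (-α) + α * x.1) ^ (-1 / α)) • ContinuousLinearMap.snd ℝ ℝ ℝ
          + x.2 • ((-(B * u₀⁻¹)) • ContinuousLinearMap.fst ℝ ℝ ℝ)) x :=
      h1.mul hasFDerivAt_snd
    have hmx : m x = c₀ * L := by
      simp only [hm x]
      have : (c₀ ^ (-α) + α * x.1) ^ (-1 / α) * x.2 = c₀ * L := heq
      rw [this, min_self]
    have hfx : (c₀ ^ (-α) + α * x.1) ^ (-1 / α) * x.2 = c₀ * L := heq
    have hlit : ∀ ε > (0:ℝ), ∀ᶠ y in nhds x,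
        |(c₀ ^ (-α) + α * y.1) ^ (-1 / α) * y.2 - c₀ * L
          - (A * (y.1 - x.1) + B * (y.2 - x.2))| ≤ ε * ‖y - x‖ := by
      intro ε hε
      have hlo := hF.isLittleO
      have := Asymptotics.isLittleO_iff.mp hlo hε
      refine this.mono fun y hy => ?_
      have happ : (((c₀ ^ (-α) + α * x.1) ^ (-1 / α)) • ContinuousLinearMap.snd ℝ ℝ ℝ
          + x.2 • ((-(B * u₀⁻¹)) • ContinuousLinearMap.fst ℝ ℝ ℝ)) (y - x)
          = A * (y.1 - x.1) + B * (y.2 - x.2) := by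
        simp [hAdef, hBdef, hu₀def]
        ring
      rw [← happ, ← hfx]
      simpa [Real.norm_eq_abs] using hy
    have hmle : ∀ y : ℝ × ℝ, m y ≤ c₀ * L := fun y => by
      rw [hm y]; exact min_le_right _ _
    have hmf : ∀ y : ℝ × ℝ, m y ≤ (c₀ ^ (-α) + α * y.1) ^ (-1 / α) * y.2 := fun y => by
      rw [hm y]; exact min_le_left _ _
    refine ⟨?_, ?_⟩
    · rw [Set.eq_empty_iff_forall_notMem]
      intro p hp
      have ha : p = 0 := by
        apply key_zero x p
        intro ε hε
        refine (hp ε hε).mono fun y hy => ?_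
        have h1 := hmle y
        rw [hmx] at hy
        linarith
      have hb : ((p.1 - A, p.2 - B) : ℝ × ℝ) = 0 := by
        apply key_zero x (p.1 - A, p.2 - B)
        intro ε hε
        filter_upwards [hp (ε/2) (by linarith), hlit (ε/2) (by linarith)] with y hy1 hy2
        obtain ⟨hl, hr⟩ := abs_le.mp hy2
        have h2 := hmf y
        rw [hmx] at hy1
        nlinarith [hy1, hr, h2]
      have hB0 : p.2 - B = 0 := by
        have := congrArg Prod.snd hb; simpa using this
      have hp2 : p.2 = 0 := by
        have := congrArg Prod.snd ha; simpa using this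
      nlinarith [hB]
    · intro p hp
      have claim : ∀ v1 v2 : ℝ, min (A * v1 + B * v2) 0 ≤ p.1 * v1 + p.2 * v2 := by
        intro v1 v2
        apply le_of_forall_pos_le_add
        intro δ hδ
        set v : ℝ × ℝ := (v1, v2) with hvdef
        have hεpos : 0 < δ / (2 * ‖v‖ + 1) := by positivity
        obtain ⟨s, hs, hy⟩ := exists_pos_path x v ((hp _ hεpos).and (hlit _ hεpos))
        obtain ⟨hy1, hy2⟩ := hy
        have e1 : (x + s • v).1 - x.1 = s * v1 := by simp [hvdef]
        have e2 : (x + s • v).2 - x.2 = s * v2 := by simp [hvdef]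
        have en : ‖x + s • v - x‖ = s * ‖v‖ := by
          rw [add_sub_cancel_left, norm_smul, Real.norm_eq_abs, abs_of_pos hs]
        rw [e1, e2, en, hmx, hm (x + s • v)] at hy1
        rw [e1, e2, en] at hy2
        set G : ℝ := (c₀ ^ (-α) + α * (x + s • v).1) ^ (-1 / α) * (x + s • v).2 with hGdef
        obtain ⟨hl, hr⟩ := abs_le.mp hy2
        have hminD1 : min (A * v1 + B * v2) 0 ≤ A * v1 + B * v2 := min_le_left _ _
        have hminD0 : min (A * v1 + B * v2) 0 ≤ 0 := min_le_right _ _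
        have hsε : 0 ≤ δ / (2 * ‖v‖ + 1) * (s * ‖v‖) := by positivity
        have hlb : c₀ * L + s * min (A * v1 + B * v2) 0 - δ / (2 * ‖v‖ + 1) * (s * ‖v‖)
            ≤ min G (c₀ * L) := by
          apply le_min
          · have hmul := mul_le_mul_of_nonneg_left hminD1 hs.le
            nlinarith [hl]
          · nlinarith [mul_le_mul_of_nonneg_left hminD0 hs.le]
        have hdiv : s * min (A * v1 + B * v2) 0
            ≤ s * (p.1 * v1 + p.2 * v2 + 2 * (δ / (2 * ‖v‖ + 1)) * ‖v‖) := by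
          nlinarith [hy1, hlb]
        have hfin := le_of_mul_le_mul_left hdiv hs
        have h2v : (0:ℝ) < 2 * ‖v‖ + 1 := by positivity
        have hbound : 2 * (δ / (2 * ‖v‖ + 1)) * ‖v‖ ≤ δ := by
          rw [show 2 * (δ / (2 * ‖v‖ + 1)) * ‖v‖ = 2 * δ * ‖v‖ / (2 * ‖v‖ + 1) by ring,
            div_le_iff₀ h2v]
          nlinarith [norm_nonneg v]
        linarith
      have hABpos : 0 < A ^ 2 + B ^ 2 := by positivity
      have hpar : p.1 * B = p.2 * A := by
        have c1 := claim B (-A)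
        have c2 := claim (-B) A
        rw [show A * B + B * -A = 0 by ring, min_self] at c1
        rw [show A * -B + B * A = 0 by ring, min_self] at c2
        nlinarith [c1, c2]
      have c3 := claim A B
      have c4 := claim (-A) (-B)
      rw [min_eq_right (by nlinarith : A * A + B * B ≥ 0)] at c3
      rw [min_eq_left (by nlinarith : A * -A + B * -B ≤ 0)] at c4
      set μ : ℝ := p.2 / B with hμdef
      have hp2 : p.2 = μ * B := by rw [hμdef, div_mul_cancel₀ _ hB.ne']
      have hp1 : p.1 = μ * A := mul_right_cancel₀ hB.ne' (by rw [hpar, hp2]; ring)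
      rw [hp1, hp2] at c3 c4
      have hμ0 : 0 ≤ μ := by nlinarith [c3, hABpos]
      have hμ1 : μ ≤ 1 := by nlinarith [c4, hABpos]
      have hμα : μ ^ α ≤ μ := by
        rcases eq_or_lt_of_le hμ0 with h0 | h0
        · rw [← h0, Real.zero_rpow hαpos.ne']
        · calc μ ^ α ≤ μ ^ (1:ℝ) := Real.rpow_le_rpow_of_exponent_ge h0 hμ1 hα.le
            _ = μ := Real.rpow_one μ
      have hmaxp : max p.2 0 = μ * B := by
        rw [hp2]; exact max_eq_left (mul_nonneg hμ0 hB.le)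
      rw [hmx, hmaxp, hp1, Real.mul_rpow hμ0 hB.le, hBα, ← heq, hAdef]
      have hpos : 0 < u₀⁻¹ * B * ρ₀ := by positivity
      nlinarith [hμα, hpos]
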